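/- Let A be a finite set with |A| ≥ 2, let n, ℓ be positive integers with n ≥ ℓ, let r = (r₁,…,r_ℓ) be positive integers with n = r₁ + ⋯ + r_ℓ, and let ⟨S_t : t ∈ A^n⟩ be any (ℓ, r)-simplicial process in a probability space. Then there exist a nonempty G ⊆ A^n and x ∈ A^n \ G such that G ∪ {x} is ℓ-separated and ⋂_{t ∈ G ∪ {x}} S_t = ⋂_{t ∈ G} S_t. In particular, the events ⟨S_t : t ∈ A^n⟩ are not independent (assuming 0 < P(S_t) < 1). -/

import Mathlib

open MeasureTheory

/-- A tuple `(t₁,…,t_p)` of elements of `A^n` is `ℓ`-separated if for every `j ≥ 2`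
there is a set `I` of `ℓ` coordinates such that every earlier `t_q` differs from `t_j`
at some coordinate of `I`. -/
def SepTuple {A : Type*} {n p : ℕ} (ℓ : ℕ) (t : Fin p → Fin n → A) : Prop :=
  ∀ j : Fin p, 1 ≤ (j : ℕ) → ∃ I : Finset (Fin n), I.card = ℓ ∧
    ∀ q : Fin p, (q : ℕ) < (j : ℕ) → ∃ i ∈ I, t j i ≠ t q i

/-- The separation index of a nonempty finite set: the minimum over all enumerations. -/
noncomputable def sepIndexSet {A : Type*} [DecidableEq A] {n : ℕ}
    (G : Finset (Fin n → A)) : ℕ :=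
  sInf {ℓ | 0 < ℓ ∧ ∃ t : Fin G.card → Fin n → A,
    Function.Injective t ∧ (∀ j, t j ∈ G) ∧ SepTuple ℓ t}

/-- The `l`-th of the successive intervals `I₁,…,I_ℓ` of `[n]` with `|I_l| = r l`. -/
def blockOf {ℓ : ℕ} (r : Fin ℓ → ℕ) (n : ℕ) (l : Fin ℓ) : Finset (Fin n) :=
  Finset.univ.filter (fun i : Fin n =>
    ∑ l' ∈ Finset.Iio l, r l' ≤ (i : ℕ) ∧ (i : ℕ) < ∑ l' ∈ Finset.Iic l, r l')

/-- `(α,β,I)`-equivalence: agree off `I`, and on `I` agree at coordinates whose value is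
outside `{α, β}`. -/
def EquivABI {A : Type*} {n : ℕ} (α β : A) (I : Finset (Fin n)) (s t : Fin n → A) : Prop :=
  (∀ i ∉ I, s i = t i) ∧
    ∀ i ∈ I, ∀ γ : A, γ ≠ α → γ ≠ β → (s i = γ ↔ t i = γ)

/-- An `(α,β,I)`-insensitive process. -/
def InsensitiveOn {A Ω : Type*} {n : ℕ} (α β : A) (I : Finset (Fin n))
    (E : (Fin n → A) → Set Ω) : Prop :=
  ∀ s t : Fin n → A, EquivABI α β I s t → E s = E t

/-- An `(ℓ, r)`-simplicial process on `A^n`. -/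
def IsSimplicial {A Ω : Type*} {n ℓ : ℕ} (r : Fin ℓ → ℕ)
    (S : (Fin n → A) → Set Ω) : Prop :=
  ∃ (β : Fin ℓ → A) (Γ : Fin ℓ → Finset A)
    (E : (l : Fin ℓ) → A → (Fin n → A) → Set Ω),
    (∀ l, (Γ l).Nonempty) ∧ (∀ l, ∀ α ∈ Γ l, α ≠ β l) ∧
    (∀ l, ∀ α ∈ Γ l, InsensitiveOn α (β l) (blockOf r n l) (E l α)) ∧
    ∀ t : Fin n → A, S t = ⋂ l, ⋂ α ∈ Γ l, E l α t

namespace Stmt16Aux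

section Blocks

variable {ℓ n : ℕ} {r : Fin ℓ → ℕ}

lemma mem_blockOf {l : Fin ℓ} {i : Fin n} :
    i ∈ blockOf r n l ↔ ∑ l' ∈ Finset.Iio l, r l' ≤ (i : ℕ) ∧
      (i : ℕ) < ∑ l' ∈ Finset.Iic l, r l' := by
  simp [blockOf]

lemma Iic_eq_insert (l : Fin ℓ) : Finset.Iic l = insert l (Finset.Iio l) := by
  ext m; simp [Finset.mem_Iic, Finset.mem_Iio, le_iff_lt_or_eq, or_comm]

lemma cum_eq (l : Fin ℓ) :
    ∑ l' ∈ Finset.Iic l, r l' = r l + ∑ l' ∈ Finset.Iio l, r l' := by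
  rw [Iic_eq_insert, Finset.sum_insert (by simp)]

lemma cum_le_pre {l m : Fin ℓ} (h : l < m) :
    ∑ l' ∈ Finset.Iic l, r l' ≤ ∑ l' ∈ Finset.Iio m, r l' := by
  apply Finset.sum_le_sum_of_subset
  intro a ha
  simp only [Finset.mem_Iic] at ha
  simp only [Finset.mem_Iio]
  exact lt_of_le_of_lt ha h

lemma cum_le_total (l : Fin ℓ) : ∑ l' ∈ Finset.Iic l, r l' ≤ ∑ l', r l' :=
  Finset.sum_le_sum_of_subset (Finset.subset_univ _)

lemma block_unique {l m : Fin ℓ} {i : Fin n} (hl : i ∈ blockOf r n l)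
    (hm : i ∈ blockOf r n m) : l = m := by
  rw [mem_blockOf] at hl hm
  by_contra hne
  rcases lt_or_gt_of_ne hne with h | h
  · exact absurd (lt_of_lt_of_le hl.2 (le_trans (cum_le_pre h) hm.1)) (lt_irrefl _)
  · exact absurd (lt_of_lt_of_le hm.2 (le_trans (cum_le_pre h) hl.1)) (lt_irrefl _)

lemma exists_block (hℓ : 0 < ℓ) (hrsum : ∑ l, r l = n) (i : Fin n) :
    ∃ l, i ∈ blockOf r n l := by
  classical
  set F := Finset.univ.filter (fun l : Fin ℓ => (i : ℕ) < ∑ l' ∈ Finset.Iic l, r l') with hF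
  have hFne : F.Nonempty := by
    refine ⟨⟨ℓ - 1, by omega⟩, ?_⟩
    simp only [hF, Finset.mem_filter, Finset.mem_univ, true_and]
    have : Finset.Iic (⟨ℓ - 1, by omega⟩ : Fin ℓ) = Finset.univ := by
      ext m; simp [Finset.mem_Iic, Fin.le_def]; omega
    rw [this, hrsum]
    exact i.2
  set l₁ := F.min' hFne with hl₁
  have hmem : l₁ ∈ F := F.min'_mem hFne
  simp only [hF, Finset.mem_filter, Finset.mem_univ, true_and] at hmem
  refine ⟨l₁, mem_blockOf.2 ⟨?_, hmem⟩⟩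
  by_contra hlt
  push_neg at hlt
  have hl₁pos : 0 < (l₁ : ℕ) := by
    rcases Nat.eq_zero_or_pos (l₁ : ℕ) with h | h
    · have : Finset.Iio l₁ = ∅ := by
        ext m; simp [Finset.mem_Iio, Fin.lt_def, h]
      rw [this] at hlt; simp at hlt
    · exact h
  set l₂ : Fin ℓ := ⟨(l₁ : ℕ) - 1, by omega⟩ with hl₂
  have hv : (l₂ : ℕ) = (l₁ : ℕ) - 1 := rfl
  have hIic : Finset.Iic l₂ = Finset.Iio l₁ := by
    ext m; simp only [Finset.mem_Iic, Finset.mem_Iio, Fin.le_def, Fin.lt_def, hv]; omega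
  have hl₂F : l₂ ∈ F := by
    simp only [hF, Finset.mem_filter, Finset.mem_univ, true_and, hIic]
    exact hlt
  have := F.min'_le _ hl₂F
  rw [← hl₁] at this
  have : (l₁ : ℕ) ≤ (l₂ : ℕ) := this
  have h2 : (l₁ : ℕ) ≤ (l₁ : ℕ) - 1 := this
  omega

lemma blockOf_nonempty (hr : ∀ l, 0 < r l) (hrsum : ∑ l, r l = n) (l : Fin ℓ) :
    ∃ i : Fin n, i ∈ blockOf r n l := by
  have h1 : ∑ l' ∈ Finset.Iio l, r l' < ∑ l' ∈ Finset.Iic l, r l' := by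
    rw [cum_eq]; have := hr l; omega
  have h2 : ∑ l' ∈ Finset.Iio l, r l' < n := lt_of_lt_of_le h1 (hrsum ▸ cum_le_total l)
  exact ⟨⟨_, h2⟩, mem_blockOf.2 ⟨le_refl _, h1⟩⟩

lemma exists_bIdx (hℓ : 0 < ℓ) (hr : ∀ l, 0 < r l) (hrsum : ∑ l, r l = n) :
    ∃ b : Fin n → Fin ℓ, (∀ i l, b i = l ↔ i ∈ blockOf r n l) ∧ ∀ l, ∃ i, b i = l := by
  classical
  choose b hb using exists_block (r := r) hℓ hrsum
  refine ⟨b, fun i l => ⟨fun h => h ▸ hb i, fun h => block_unique (hb i) h⟩, fun l => ?_⟩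
  obtain ⟨i, hi⟩ := blockOf_nonempty hr hrsum l
  exact ⟨i, block_unique (hb i) hi⟩

end Blocks

section Points

variable {A : Type*} {ℓ n : ℕ}

/-- cube point -/
def upt (b : Fin n → Fin ℓ) (β α : Fin ℓ → A) (J : Finset (Fin ℓ)) : Fin n → A :=
  fun i => if b i ∈ J then β (b i) else α (b i)

/-- extra point -/
def vpt (b : Fin n → Fin ℓ) (β : Fin ℓ → A) (l : Fin ℓ) (a : A) : Fin n → A :=
  fun i => if b i = l then a else β (b i)

variable {b : Fin n → Fin ℓ} {β α : Fin ℓ → A}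

lemma upt_inj (hαβ : ∀ l, α l ≠ β l) (hbs : ∀ l, ∃ i, b i = l)
    {J K : Finset (Fin ℓ)} (h : upt b β α J = upt b β α K) : J = K := by
  classical
  ext l
  obtain ⟨i, hi⟩ := hbs l
  have := congrFun h i
  simp only [upt, hi] at this
  by_cases hJ : l ∈ J <;> by_cases hK : l ∈ K <;>
    simp [hJ, hK] at this ⊢ <;> exact (hαβ l) (by tauto)

lemma lower_bound [DecidableEq A] (hαβ : ∀ l, α l ≠ β l) (hbs : ∀ l, ∃ i, b i = l)
    (hℓ : 0 < ℓ)
    {T : Finset (Fin n → A)} (hT : ∀ J : Finset (Fin ℓ), upt b β α J ∈ T)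
    {m : ℕ} (t : Fin T.card → Fin n → A) (ht : Function.Injective t)
    (htm : ∀ j, t j ∈ T) (hsep : SepTuple m t) : ℓ ≤ m := by
  classical
  have : Nonempty (Fin ℓ) := ⟨⟨0, hℓ⟩⟩
  have himg : Finset.univ.image t = T := by
    apply Finset.eq_of_subset_of_card_le
    · intro s hs
      obtain ⟨j, _, rfl⟩ := Finset.mem_image.1 hs
      exact htm j
    · rw [Finset.card_image_of_injective _ ht, Finset.card_univ, Fintype.card_fin]
  have hsurj : ∀ J : Finset (Fin ℓ), ∃ j, t j = upt b β α J := by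
    intro J
    have := hT J
    rw [← himg, Finset.mem_image] at this
    obtain ⟨j, _, hj⟩ := this
    exact ⟨j, hj⟩
  choose σ hσ using hsurj
  have hσinj : Function.Injective σ := fun J K h => upt_inj hαβ hbs (by rw [← hσ J, ← hσ K, h])
  have hne : (Finset.univ.image σ).Nonempty :=
    ⟨σ ∅, Finset.mem_image.2 ⟨∅, Finset.mem_univ _, rfl⟩⟩
  set j₀ := (Finset.univ.image σ).max' hne with hj₀
  obtain ⟨J₀, -, hJ₀⟩ := Finset.mem_image.1 ((Finset.univ.image σ).max'_mem hne)
  have hle : ∀ J : Finset (Fin ℓ), σ J ≤ j₀ := fun J =>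
    Finset.le_max' _ _ (Finset.mem_image.2 ⟨J, Finset.mem_univ _, rfl⟩)
  have hj₀1 : 1 ≤ (j₀ : ℕ) := by
    have h1 : σ ∅ ≠ σ Finset.univ := fun h =>
      (Finset.univ_nonempty (α := Fin ℓ)).ne_empty (hσinj h).symm
    have h2 := hle ∅
    have h3 := hle Finset.univ
    rw [Fin.le_def] at h2 h3
    by_contra h
    push_neg at h
    exact h1 (Fin.ext (by omega))
  obtain ⟨I, hIcard, hsepI⟩ := hsep j₀ hj₀1
  have hblock : ∀ l : Fin ℓ, ∃ i ∈ I, b i = l := by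
    intro l
    set K : Finset (Fin ℓ) := if l ∈ J₀ then J₀.erase l else insert l J₀ with hK
    have hlK : l ∈ K ↔ l ∉ J₀ := by
      by_cases h : l ∈ J₀ <;> simp [hK, h]
    have hKne : K ≠ J₀ := by
      intro he; rw [he] at hlK; tauto
    have hmemK : ∀ m : Fin ℓ, m ≠ l → (m ∈ K ↔ m ∈ J₀) := by
      intro m hm
      by_cases h : l ∈ J₀ <;> simp [hK, h, Finset.mem_erase, Finset.mem_insert, hm]
    have hqne : σ K ≠ j₀ := fun h => hKne (hσinj (h.trans hJ₀.symm))
    have hqlt : ((σ K : Fin T.card) : ℕ) < (j₀ : ℕ) :=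
      lt_of_le_of_ne (Fin.le_def.1 (hle K)) (fun h => hqne (Fin.ext h))
    obtain ⟨i, hiI, hne'⟩ := hsepI (σ K) hqlt
    refine ⟨i, hiI, ?_⟩
    by_contra hbil
    apply hne'
    have e1 : t j₀ = upt b β α J₀ := by rw [hj₀, ← hJ₀, hσ]
    have e2 : t (σ K) = upt b β α K := hσ K
    rw [e1, e2]
    simp only [upt]
    have hx : (b i ∈ K) = (b i ∈ J₀) := propext (hmemK (b i) hbil)
    simp only [hx]
  choose f hfI hfb using hblock
  have hfinj : Function.Injective f := fun l l' h => by rw [← hfb l, ← hfb l', h]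
  calc ℓ = (Finset.univ.image f).card := by
        rw [Finset.card_image_of_injective _ hfinj, Finset.card_univ, Fintype.card_fin]
    _ ≤ I.card := Finset.card_le_card (by
        intro i hi
        obtain ⟨l, -, rfl⟩ := Finset.mem_image.1 hi
        exact hfI l)
    _ = m := hIcard

lemma upper_bound [DecidableEq A] {rep : Fin ℓ → Fin n} (hrep : ∀ l, b (rep l) = l)
    {T : Finset (Fin n → A)}
    (hTbc : ∀ s ∈ T, ∃ g : Fin ℓ → A, s = fun i => g (b i)) :
    ∃ t : Fin T.card → Fin n → A,
      Function.Injective t ∧ (∀ j, t j ∈ T) ∧ SepTuple ℓ t := by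
  classical
  have hrepinj : Function.Injective rep := fun l l' h => by rw [← hrep l, ← hrep l', h]
  refine ⟨fun j => ((T.equivFin.symm j : T) : Fin n → A), ?_, fun j => (T.equivFin.symm j).2, ?_⟩
  · intro j k h
    exact T.equivFin.symm.injective (Subtype.coe_injective h)
  · intro j hj
    refine ⟨Finset.univ.image rep, ?_, ?_⟩
    · rw [Finset.card_image_of_injective _ hrepinj, Finset.card_univ, Fintype.card_fin]
    · intro q hq
      have hne : ((T.equivFin.symm j : T) : Fin n → A) ≠ ((T.equivFin.symm q : T) : Fin n → A) := by
        intro h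
        have := T.equivFin.symm.injective (Subtype.coe_injective h)
        rw [this] at hq
        omega
      obtain ⟨gj, hgj⟩ := hTbc _ (T.equivFin.symm j).2
      obtain ⟨gq, hgq⟩ := hTbc _ (T.equivFin.symm q).2
      by_contra hall
      push_neg at hall
      apply hne
      rw [hgj, hgq]
      funext i
      have h1 := hall (rep (b i)) (Finset.mem_image.2 ⟨b i, Finset.mem_univ _, rfl⟩)
      rw [hgj, hgq] at h1
      simpa [hrep] using h1

end Points

end Stmt16Aux

theorem stmt16 {A Ω : Type*} [Fintype A] [DecidableEq A] [MeasurableSpace Ω]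
    (hA : 2 ≤ Fintype.card A) {n ℓ : ℕ} (hℓ : 0 < ℓ) (hn : ℓ ≤ n)
    (r : Fin ℓ → ℕ) (hr : ∀ l, 0 < r l) (hrsum : ∑ l, r l = n)
    (P : Measure Ω) [IsProbabilityMeasure P]
    (S : (Fin n → A) → Set Ω) (hmeas : ∀ t, MeasurableSet (S t))
    (hS : IsSimplicial r S) (hP : ∀ t, 0 < P (S t) ∧ P (S t) < 1) :
    ∃ (G : Finset (Fin n → A)) (x : Fin n → A), G.Nonempty ∧ x ∉ G ∧
      sepIndexSet (insert x G) = ℓ ∧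
      (⋂ t ∈ insert x G, S t) = (⋂ t ∈ G, S t) ∧
      ¬ ProbabilityTheory.iIndepSet S P := by
  classical
  haveI : Nonempty (Fin ℓ) := ⟨⟨0, hℓ⟩⟩
  obtain ⟨β, Γ, E, hΓ, hαβ, hins, hSE⟩ := hS
  choose α hα using hΓ
  have hαβ' : ∀ l, α l ≠ β l := fun l => hαβ l _ (hα l)
  obtain ⟨b, hb, hbs⟩ := Stmt16Aux.exists_bIdx hℓ hr hrsum
  choose rep hrep using hbs
  set x0 : Fin n → A := Stmt16Aux.upt b β α Finset.univ with hx0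
  set T : Finset (Fin n → A) :=
    ((Finset.univ : Finset (Finset (Fin ℓ))).image (Stmt16Aux.upt b β α)) ∪
      (Finset.univ.biUnion fun l => (Γ l).image (Stmt16Aux.vpt b β l)) with hTdef
  have hx0T : x0 ∈ T :=
    Finset.mem_union_left _ (Finset.mem_image.2 ⟨Finset.univ, Finset.mem_univ _, rfl⟩)
  have huT : ∀ J, Stmt16Aux.upt b β α J ∈ T := fun J =>
    Finset.mem_union_left _ (Finset.mem_image.2 ⟨J, Finset.mem_univ _, rfl⟩)
  have hvT : ∀ l, ∀ a ∈ Γ l, Stmt16Aux.vpt b β l a ∈ T := fun l a ha =>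
    Finset.mem_union_right _
      (Finset.mem_biUnion.2 ⟨l, Finset.mem_univ _, Finset.mem_image.2 ⟨a, ha, rfl⟩⟩)
  have hx0v : ∀ i, x0 i = β (b i) := fun i => by simp [hx0, Stmt16Aux.upt]
  have hvne : ∀ l, ∀ a ∈ Γ l, Stmt16Aux.vpt b β l a ≠ x0 := by
    intro l a ha h
    have h2 := congrFun h (rep l)
    rw [hx0v] at h2
    simp [Stmt16Aux.vpt, hrep l] at h2
    exact hαβ l a ha h2
  set G := T.erase x0 with hG
  have hxG : x0 ∉ G := Finset.notMem_erase _ _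
  have hinsG : insert x0 G = T := Finset.insert_erase hx0T
  have hGne : G.Nonempty := by
    refine ⟨Stmt16Aux.upt b β α ∅, Finset.mem_erase.2 ⟨?_, huT ∅⟩⟩
    intro h
    rw [hx0] at h
    have h2 : (∅ : Finset (Fin ℓ)) = Finset.univ :=
      Stmt16Aux.upt_inj hαβ' (fun l => ⟨rep l, hrep l⟩) h
    exact (Finset.univ_nonempty (α := Fin ℓ)).ne_empty h2.symm
  have hvG : ∀ l, ∀ a ∈ Γ l, Stmt16Aux.vpt b β l a ∈ G := fun l a ha =>
    Finset.mem_erase.2 ⟨hvne l a ha, hvT l a ha⟩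
  -- insensitivity transfers S x0's factors
  have hEq : ∀ l, ∀ a ∈ Γ l, E l a x0 = E l a (Stmt16Aux.vpt b β l a) := by
    intro l a ha
    apply hins l a ha
    constructor
    · intro i hi
      have hbi : b i ≠ l := fun h => hi ((hb i l).1 h)
      rw [hx0v]
      simp [Stmt16Aux.vpt, hbi]
    · intro i hi γ hγa hγβ
      have hbi : b i = l := (hb i l).2 hi
      rw [hx0v]
      simp only [Stmt16Aux.vpt, hbi, if_pos rfl]
      exact ⟨fun h => absurd h.symm hγβ, fun h => absurd h.symm hγa⟩
  have hsub : (⋂ t ∈ G, S t) ⊆ S x0 := by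
    rw [hSE x0]
    refine Set.subset_iInter fun l => Set.subset_iInter fun a => Set.subset_iInter fun ha => ?_
    rw [hEq l a ha]
    have h1 : (⋂ t ∈ G, S t) ⊆ S (Stmt16Aux.vpt b β l a) :=
      Set.biInter_subset_of_mem (hvG l a ha)
    refine h1.trans ?_
    rw [hSE]
    refine (Set.iInter_subset _ l).trans ?_
    exact Set.biInter_subset_of_mem ha
  have hintEq : (⋂ t ∈ insert x0 G, S t) = ⋂ t ∈ G, S t := by
    rw [Finset.set_biInter_insert]
    exact Set.inter_eq_right.2 hsub
  -- block-constancy of T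
  have hTbc : ∀ s ∈ T, ∃ g : Fin ℓ → A, s = fun i => g (b i) := by
    intro s hs
    rw [hTdef, Finset.mem_union] at hs
    rcases hs with hs | hs
    · obtain ⟨J, -, rfl⟩ := Finset.mem_image.1 hs
      exact ⟨fun l' => if l' ∈ J then β l' else α l', rfl⟩
    · obtain ⟨l, -, hs⟩ := Finset.mem_biUnion.1 hs
      obtain ⟨a, -, rfl⟩ := Finset.mem_image.1 hs
      exact ⟨fun l' => if l' = l then a else β l', rfl⟩
  have hsepT : sepIndexSet T = ℓ := by
    have hmem : ℓ ∈ {m | 0 < m ∧ ∃ t : Fin T.card → Fin n → A,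
        Function.Injective t ∧ (∀ j, t j ∈ T) ∧ SepTuple m t} :=
      ⟨hℓ, Stmt16Aux.upper_bound hrep hTbc⟩
    unfold sepIndexSet
    refine le_antisymm (Nat.sInf_le hmem) (le_csInf ⟨ℓ, hmem⟩ ?_)
    rintro m ⟨hm0, t, ht, htm, hst⟩
    exact Stmt16Aux.lower_bound hαβ' (fun l => ⟨rep l, hrep l⟩) hℓ huT t ht htm hst
  have hnind : ¬ ProbabilityTheory.iIndepSet S P := by
    intro hind
    have h1 := ProbabilityTheory.iIndepSet.meas_biInter hind (insert x0 G)
    have h2 := ProbabilityTheory.iIndepSet.meas_biInter hind G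
    rw [hintEq, h2, Finset.prod_insert hxG] at h1
    have hc0 : (∏ t ∈ G, P (S t)) ≠ 0 := Finset.prod_ne_zero_iff.2 fun t _ => (hP t).1.ne'
    have hct : (∏ t ∈ G, P (S t)) ≠ ⊤ := ENNReal.prod_ne_top fun t _ => measure_ne_top P _
    have h3 : P (S x0) * ∏ t ∈ G, P (S t) = 1 * ∏ t ∈ G, P (S t) := by
      rw [one_mul]; exact h1.symm
    have h4 : P (S x0) = 1 := (ENNReal.mul_left_inj hc0 hct).1 h3
    exact absurd h4 (hP x0).2.ne
  exact ⟨G, x0, hGne, hxG, by rw [hinsG]; exact hsepT, hintEq, hnind⟩
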